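/- Let α, β > −1. The operator (L f)(x) := (1−x²) f'(x) − (1/2)(α−β+(α+β+2)x) f(x) acting on real polynomials is skew symmetric with respect to the Jacobi inner product: ⟨L f, g⟩ = −⟨f, L g⟩ for all polynomials f, g. -/

import Mathlib

open Polynomial Set

/-- The first order differential operator `(Lf)(x) = (1-x²)f'(x) - ½(α-β+(α+β+2)x)f(x)`
acting on real polynomials. -/
noncomputable def jacobiL (α β : ℝ) (f : ℝ[X]) : ℝ[X] :=
  (1 - X ^ 2) * derivative f - C (1 / 2) * (C (α - β) + C (α + β + 2) * X) * f

lemma jacobiW_intervalIntegrable (α β : ℝ) (hα : -1 < α) (hβ : -1 < β) (P : ℝ[X]) :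
    IntervalIntegrable (fun x => P.eval x * (1 - x) ^ α * (1 + x) ^ β)
      MeasureTheory.volume (-1) 1 := by
  have hleft : IntervalIntegrable (fun x => P.eval x * (1 - x) ^ α * (1 + x) ^ β)
      MeasureTheory.volume (-1) 0 := by
    have h1 : IntervalIntegrable (fun x : ℝ => (x + 1) ^ β) MeasureTheory.volume (-1) 0 := by
      have := (intervalIntegral.intervalIntegrable_rpow' (a := 0) (b := 1) hβ).comp_add_right 1
      norm_num at this
      exact this
    have h2 : ContinuousOn (fun x : ℝ => P.eval x * (1 - x) ^ α) (uIcc (-1 : ℝ) 0) := by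
      apply ContinuousOn.mul (P.continuous.continuousOn)
      apply ContinuousOn.rpow_const ((continuous_const.sub continuous_id).continuousOn)
      intro x hx
      rw [uIcc_of_le (by norm_num)] at hx
      left
      have : x ≤ 0 := hx.2
      intro h; simp at h; nlinarith
    have h3 := h1.mul_continuousOn h2
    have : (fun x => P.eval x * (1 - x) ^ α * (1 + x) ^ β) =
        fun x => (x + 1) ^ β * (P.eval x * (1 - x) ^ α) := by
      funext x; ring_nf
    rw [this]; exact h3
  have hright : IntervalIntegrable (fun x => P.eval x * (1 - x) ^ α * (1 + x) ^ β)
      MeasureTheory.volume 0 1 := by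
    have h1 : IntervalIntegrable (fun x : ℝ => (1 - x) ^ α) MeasureTheory.volume 0 1 := by
      have := ((intervalIntegral.intervalIntegrable_rpow' (a := 0) (b := 1) hα).comp_sub_left 1).symm
      norm_num at this
      exact this
    have h2 : ContinuousOn (fun x : ℝ => P.eval x * (1 + x) ^ β) (uIcc (0 : ℝ) 1) := by
      apply ContinuousOn.mul (P.continuous.continuousOn)
      apply ContinuousOn.rpow_const ((continuous_const.add continuous_id).continuousOn)
      intro x hx
      rw [uIcc_of_le (by norm_num)] at hx
      left
      have : 0 ≤ x := hx.1
      intro h; have h' : (1:ℝ) + x = 0 := h; nlinarith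
    have h3 := h1.mul_continuousOn h2
    have : (fun x => P.eval x * (1 - x) ^ α * (1 + x) ^ β) =
        fun x => (1 - x) ^ α * (P.eval x * (1 + x) ^ β) := by
      funext x; ring_nf
    rw [this]; exact h3
  exact hleft.trans hright

/-- The operator `jacobiL α β` is skew symmetric with respect to the Jacobi inner product
`⟨f,g⟩ = ∫_{-1}^{1} f(x) g(x) (1-x)^α (1+x)^β dx`. -/
theorem jacobiL_skew_symmetric (α β : ℝ) (hα : -1 < α) (hβ : -1 < β) (f g : ℝ[X]) :
    (∫ x in (-1:ℝ)..1,
        (jacobiL α β f).eval x * g.eval x * (1 - x) ^ α * (1 + x) ^ β) =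
      - ∫ x in (-1:ℝ)..1,
        f.eval x * (jacobiL α β g).eval x * (1 - x) ^ α * (1 + x) ^ β := by
  set H : ℝ → ℝ := fun x => f.eval x * g.eval x * ((1 - x) ^ (α + 1) * (1 + x) ^ (β + 1))
    with hH
  set φ : ℝ → ℝ := fun x =>
    (jacobiL α β f).eval x * g.eval x * (1 - x) ^ α * (1 + x) ^ β +
      f.eval x * (jacobiL α β g).eval x * (1 - x) ^ α * (1 + x) ^ β with hφ
  have hint1 : IntervalIntegrable
      (fun x => (jacobiL α β f).eval x * g.eval x * (1 - x) ^ α * (1 + x) ^ β)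
      MeasureTheory.volume (-1) 1 := by
    have := jacobiW_intervalIntegrable α β hα hβ (jacobiL α β f * g)
    simpa using this
  have hint2 : IntervalIntegrable
      (fun x => f.eval x * (jacobiL α β g).eval x * (1 - x) ^ α * (1 + x) ^ β)
      MeasureTheory.volume (-1) 1 := by
    have := jacobiW_intervalIntegrable α β hα hβ (f * jacobiL α β g)
    simpa using this
  have hderiv : ∀ x ∈ Ioo (-1 : ℝ) 1, HasDerivAt H (φ x) x := by
    intro x hx
    have hx1 : (0:ℝ) < 1 - x := by linarith [hx.2]
    have hx2 : (0:ℝ) < 1 + x := by linarith [hx.1]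
    have d1 : HasDerivAt (fun y : ℝ => (1 - y) ^ (α + 1))
        ((-1) * (α + 1) * (1 - x) ^ (α + 1 - 1)) x :=
      ((hasDerivAt_id x).const_sub 1).rpow_const (Or.inl hx1.ne')
    have d2 : HasDerivAt (fun y : ℝ => (1 + y) ^ (β + 1))
        (1 * (β + 1) * (1 + x) ^ (β + 1 - 1)) x :=
      ((hasDerivAt_id x).const_add 1).rpow_const (Or.inl hx2.ne')
    have dfg : HasDerivAt (fun y : ℝ => f.eval y * g.eval y)
        ((derivative f).eval x * g.eval x + f.eval x * (derivative g).eval x) x :=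
      (f.hasDerivAt x).mul (g.hasDerivAt x)
    have := dfg.mul (d1.mul d2)
    refine this.congr_deriv ?_
    have e1 : (1 - x) ^ (α + 1) = (1 - x) ^ α * (1 - x) := Real.rpow_add_one hx1.ne' α
    have e2 : (1 + x) ^ (β + 1) = (1 + x) ^ β * (1 + x) := Real.rpow_add_one hx2.ne' β
    simp only [hφ, jacobiL, eval_sub, eval_mul, eval_add, eval_one, eval_pow, eval_X, eval_C,
      add_sub_cancel_right, Pi.mul_apply] at *
    rw [e1, e2]
    ring
  have hcont : ContinuousOn H (Icc (-1 : ℝ) 1) := by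
    apply Continuous.continuousOn
    apply Continuous.mul (f.continuous.mul g.continuous)
    apply Continuous.mul
    · exact (continuous_const.sub continuous_id).rpow_const (fun x => Or.inr (by linarith))
    · exact (continuous_const.add continuous_id).rpow_const (fun x => Or.inr (by linarith))
  have hφint : IntervalIntegrable φ MeasureTheory.volume (-1) 1 := hint1.add hint2
  have key : (∫ x in (-1:ℝ)..1, φ x) = H 1 - H (-1) :=
    intervalIntegral.integral_eq_sub_of_hasDeriv_right_of_le (by norm_num) hcont
      (fun x hx => (hderiv x hx).hasDerivWithinAt) hφint
  have hH1 : H 1 = 0 := by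
    simp [hH, Real.zero_rpow (by linarith : α + 1 ≠ 0)]
  have hHm1 : H (-1) = 0 := by
    simp [hH, Real.zero_rpow (by linarith : β + 1 ≠ 0)]
  rw [hφ] at key
  rw [intervalIntegral.integral_add hint1 hint2, hH1, hHm1] at key
  linarith [key]
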